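/- An exponential vector space X admits a basis of X\X₀ if and only if the feasible set Q(X) := {x∈X\X₀ : (↓x)\X₀ ⊆ L(x)} generates X\X₀, i.e., X\X₀ = ⋃_{x∈Q(X)} L(x). -/

import Mathlib

/-- An exponential vector space (evs) over a field `K`. -/
class EVS (K : Type*) [Field K] (X : Type*) extends PartialOrder X, AddCommMonoid X, SMul K X where
  add_le_add_right' : ∀ {x y : X}, x ≤ y → ∀ z : X, x + z ≤ y + z
  smul_le_smul' : ∀ {x y : X}, x ≤ y → ∀ α : K, α • x ≤ α • y
  smul_add' : ∀ (α : K) (x y : X), α • (x + y) = α • x + α • y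
  mul_smul' : ∀ (α β : K) (x : X), α • (β • x) = (α * β) • x
  add_smul_le' : ∀ (α β : K) (x : X), (α + β) • x ≤ α • x + β • x
  one_smul' : ∀ x : X, (1 : K) • x = x
  smul_eq_zero_iff' : ∀ (α : K) (x : X), α • x = 0 ↔ α = 0 ∨ x = 0
  primitive_iff' : ∀ x : X, x + (-1 : K) • x = 0 ↔ (∀ y : X, y ≤ x → y = x)
  exists_primitive' : ∀ x : X, ∃ p : X, (∀ y : X, y ≤ p → y = p) ∧ p ≤ x

namespace EVS

variable (K : Type*) [Field K]

/-- The primitive space `X₀`: the set of minimal elements of `X`. -/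
def primSpace (X : Type*) [EVS K X] : Set X := {x | ∀ y, y ≤ x → y = x}

/-- The testing set `L(x)`. -/
def L {X : Type*} [EVS K X] (x : X) : Set X :=
  {z | ∃ α : K, α ≠ 0 ∧ ∃ p ∈ primSpace K X, α • x + p ≤ z}

/-- `B` is a generator of `X ∖ X₀`. -/
def Generates {X : Type*} [EVS K X] (B : Set X) : Prop :=
  B ⊆ (primSpace K X)ᶜ ∧ (primSpace K X)ᶜ = ⋃ x ∈ B, L K x

/-- `B` is an orderly independent subset of `X ∖ X₀`. -/
def OrderlyIndep {X : Type*} [EVS K X] (B : Set X) : Prop :=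
  B ⊆ (primSpace K X)ᶜ ∧ ∀ x ∈ B, ∀ y ∈ B, x ≠ y → x ∉ L K y ∧ y ∉ L K x

/-- `B` is a basis of `X ∖ X₀`. -/
def IsBasis {X : Type*} [EVS K X] (B : Set X) : Prop :=
  OrderlyIndep K B ∧ Generates K B

/-- The feasible set `Q(X)`. -/
def Q (X : Type*) [EVS K X] : Set X :=
  {x | x ∉ primSpace K X ∧ ∀ y, y ≤ x → y ∉ primSpace K X → y ∈ L K x}

/-- An order-isomorphism between two evs over a common field `K`. -/
structure IsOrderIso {X Y : Type*} [EVS K X] [EVS K Y] (φ : X → Y) : Prop where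
  bijective : Function.Bijective φ
  map_add : ∀ x y : X, φ (x + y) = φ x + φ y
  map_smul : ∀ (α : K) (x : X), φ (α • x) = α • φ x
  le_iff : ∀ x y : X, x ≤ y ↔ φ x ≤ φ y

end EVS

namespace EVS

variable {K X : Type*} [Field K] [EVS K X]

lemma aux_smul_zero (α : K) : α • (0 : X) = 0 :=
  (smul_eq_zero_iff' α (0 : X)).mpr (Or.inr rfl)

lemma aux_zero_prim : (0 : X) ∈ primSpace K X := by
  apply (primitive_iff' (0 : X)).mp
  rw [aux_smul_zero, add_zero]

lemma aux_prim_neg {p : X} (hp : p ∈ primSpace K X) : p + (-1 : K) • p = 0 :=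
  (primitive_iff' p).mpr hp

lemma aux_prim_smul {p : X} (hp : p ∈ primSpace K X) (α : K) :
    α • p ∈ primSpace K X := by
  apply (primitive_iff' (α • p)).mp
  have h := congrArg (α • ·) (aux_prim_neg (K := K) hp)
  rw [smul_add', mul_smul', aux_smul_zero] at h
  rw [mul_smul', neg_one_mul, ← mul_neg_one, h]

lemma aux_prim_add {p q : X} (hp : p ∈ primSpace K X) (hq : q ∈ primSpace K X) :
    p + q ∈ primSpace K X := by
  apply (primitive_iff' (p + q)).mp
  rw [smul_add', add_add_add_comm, aux_prim_neg hp, aux_prim_neg hq, add_zero]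

lemma aux_nonprim {x : X} (hx : x ∉ primSpace K X) {α : K} (hα : α ≠ 0) {p : X}
    (hp : p ∈ primSpace K X) : α • x + p ∉ primSpace K X := by
  intro h
  apply hx
  apply (primitive_iff' x).mp
  have h0 : α • x + p + (-1 : K) • (α • x + p) = 0 := (primitive_iff' _).mpr h
  rw [smul_add', mul_smul', add_add_add_comm, aux_prim_neg hp, add_zero] at h0
  have h1 := congrArg (α⁻¹ • ·) h0
  rw [smul_add', mul_smul', mul_smul', aux_smul_zero, inv_mul_cancel₀ hα,
    one_smul'] at h1
  have harith : α⁻¹ * (-1 * α) = (-1 : K) := by field_simp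
  rwa [harith] at h1

lemma aux_mem_L_self (x : X) : x ∈ L K x :=
  ⟨1, one_ne_zero, 0, aux_zero_prim, by rw [one_smul', add_zero]⟩

lemma aux_L_trans {x y z : X} (hzy : z ∈ L K y) (hyx : y ∈ L K x) : z ∈ L K x := by
  obtain ⟨α, hα, p, hp, hle⟩ := hzy
  obtain ⟨β, hβ, q, hq, hle'⟩ := hyx
  refine ⟨α * β, mul_ne_zero hα hβ, α • q + p, aux_prim_add (aux_prim_smul hq α) hp, ?_⟩
  calc (α * β) • x + (α • q + p) = α • (β • x + q) + p := by
        rw [smul_add', mul_smul', add_assoc]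
    _ ≤ α • y + p := add_le_add_right' (smul_le_smul' hle' α) p
    _ ≤ z := hle

lemma aux_L_nonprim {x : X} (hx : x ∉ primSpace K X) {z : X} (hz : z ∈ L K x) :
    z ∉ primSpace K X := by
  obtain ⟨α, hα, p, hp, hle⟩ := hz
  intro h
  have heq : α • x + p = z := h _ hle
  exact aux_nonprim hx hα hp (heq ▸ h)

lemma aux_Q_symm {x y : X} (hx : x ∈ Q K X) (hy : y ∈ Q K X) (h : x ∈ L K y) :
    y ∈ L K x := by
  obtain ⟨α, hα, p, hp, hle⟩ := h
  have hnp : α • y + p ∉ primSpace K X := aux_nonprim hy.1 hα hp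
  obtain ⟨β, hβ, q, hq, hle'⟩ := hx.2 _ hle hnp
  refine ⟨α⁻¹ * β, mul_ne_zero (inv_ne_zero hα) hβ,
    α⁻¹ • q + (-α⁻¹) • p, aux_prim_add (aux_prim_smul hq _) (aux_prim_smul hp _), ?_⟩
  have h1 : α⁻¹ • (β • x + q) ≤ α⁻¹ • (α • y + p) := smul_le_smul' hle' _
  have h2 : α⁻¹ • (β • x + q) + (-α⁻¹) • p ≤ α⁻¹ • (α • y + p) + (-α⁻¹) • p :=
    add_le_add_right' h1 _
  have hL : (α⁻¹ * β) • x + (α⁻¹ • q + (-α⁻¹) • p)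
      = α⁻¹ • (β • x + q) + (-α⁻¹) • p := by
    rw [smul_add', mul_smul', add_assoc]
  have hR : α⁻¹ • (α • y + p) + (-α⁻¹) • p = y := by
    rw [smul_add', mul_smul', inv_mul_cancel₀ hα, one_smul', add_assoc]
    have : α⁻¹ • p + (-α⁻¹) • p = 0 := by
      have := aux_prim_neg (K := K) (aux_prim_smul hp α⁻¹)
      rwa [mul_smul', neg_one_mul] at this
    rw [this, add_zero]
  rw [hL]
  exact h2.trans (le_of_eq hR)

end EVS

/-- `X ∖ X₀` has a basis iff the feasible set `Q(X)` generates `X ∖ X₀`. -/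
theorem stmt_15 {K X : Type*} [Field K] [EVS K X] :
    (∃ B : Set X, EVS.IsBasis K B) ↔ EVS.Generates K (EVS.Q K X) := by
  open EVS in
  constructor
  · rintro ⟨B, ⟨⟨hBsub, hindep⟩, ⟨-, hBgen⟩⟩⟩
    have hBQ : B ⊆ Q K X := by
      intro x hxB
      refine ⟨hBsub hxB, ?_⟩
      intro y hyx hy
      have hy' : y ∈ ⋃ b ∈ B, L K b := hBgen ▸ (Set.mem_compl hy)
      simp only [Set.mem_iUnion, exists_prop] at hy'
      obtain ⟨b, hbB, hyb⟩ := hy'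
      obtain ⟨α, hα, p, hp, hle⟩ := hyb
      have hxLb : x ∈ L K b := ⟨α, hα, p, hp, hle.trans hyx⟩
      by_cases hxb : x = b
      · exact hxb ▸ ⟨α, hα, p, hp, hle⟩
      · exact absurd hxLb (hindep x hxB b hbB hxb).1
    refine ⟨fun x hx => hx.1, ?_⟩
    ext z
    simp only [Set.mem_iUnion, exists_prop]
    constructor
    · intro hz
      have hz' : z ∈ ⋃ b ∈ B, L K b := hBgen ▸ hz
      simp only [Set.mem_iUnion, exists_prop] at hz'
      obtain ⟨b, hbB, hzb⟩ := hz'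
      exact ⟨b, hBQ hbB, hzb⟩
    · rintro ⟨x, hxQ, hzx⟩
      exact aux_L_nonprim hxQ.1 hzx
  · rintro ⟨-, hQgen⟩
    let s : Setoid {x : X // x ∈ Q K X} :=
      ⟨fun a b => a.1 ∈ L K b.1,
        fun a => aux_mem_L_self a.1,
        fun {a b} h => aux_Q_symm a.2 b.2 h,
        fun {a b c} hab hbc => aux_L_trans hab hbc⟩
    refine ⟨Set.range (fun c : Quotient s => (Quotient.out c).1), ⟨?_, ?_⟩, ?_, ?_⟩
    · rintro _ ⟨c, rfl⟩
      exact (Quotient.out c).2.1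
    · rintro _ ⟨c₁, rfl⟩ _ ⟨c₂, rfl⟩ hne
      constructor
      · intro h
        exact hne (congrArg (fun c : Quotient s => (Quotient.out c).1)
          (Quotient.out_equiv_out.mp h))
      · intro h
        exact hne (congrArg (fun c : Quotient s => (Quotient.out c).1)
          (Quotient.out_equiv_out.mp h).symm)
    · rintro _ ⟨c, rfl⟩
      exact (Quotient.out c).2.1
    · ext z
      simp only [Set.mem_iUnion, exists_prop]
      constructor
      · intro hz
        have hz' : z ∈ ⋃ x ∈ Q K X, L K x := hQgen ▸ hz
        simp only [Set.mem_iUnion, exists_prop] at hz'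
        obtain ⟨x, hxQ, hzx⟩ := hz'
        refine ⟨(Quotient.out (⟦⟨x, hxQ⟩⟧ : Quotient s)).1, ⟨⟦⟨x, hxQ⟩⟧, rfl⟩, ?_⟩
        have hequiv : (⟨x, hxQ⟩ : {x : X // x ∈ Q K X}) ≈ Quotient.out ⟦⟨x, hxQ⟩⟧ :=
          Setoid.symm (Quotient.mk_out _)
        exact aux_L_trans hzx hequiv
      · rintro ⟨_, ⟨c, rfl⟩, hz⟩
        exact aux_L_nonprim (Quotient.out c).2.1 hz
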